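/- Let X be a complex Banach space and let A : X → X and Π : X → X be bounded linear operators with Π ∘ Π = Π, Π ∘ A = 0 and A ∘ Π = 0. Let μ be a nonzero complex number and K > 0, and suppose that ‖x‖ ≤ K·‖Ax + μx‖ for every x ∈ ker Π. Then for every w ∈ X: ‖w‖ ≤ ( K·‖Id − Π‖ + ‖Π‖/|μ| )·‖Aw + μw‖. -/

import Mathlib

/-- Resolvent-norm transfer estimate of Lemma 3.10(5) (Step 5e): if
`‖x‖ ≤ K‖Ax + μx‖` for all `x ∈ ker Π`, then for every `w ∈ X`,
`‖w‖ ≤ (K‖Id − Π‖ + ‖Π‖/|μ|)‖Aw + μw‖`. -/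
theorem riesz_projector_resolvent_transfer
    {X : Type*} [NormedAddCommGroup X] [NormedSpace ℂ X] [CompleteSpace X]
    (A Pr : X →L[ℂ] X)
    (hPr : Pr.comp Pr = Pr) (hPrA : Pr.comp A = 0) (hAPr : A.comp Pr = 0)
    (μ : ℂ) (hμ : μ ≠ 0) (K : ℝ) (hK : 0 < K)
    (hres : ∀ x : X, x ∈ LinearMap.ker (Pr : X →ₗ[ℂ] X) → ‖x‖ ≤ K * ‖A x + μ • x‖) :
    ∀ w : X, ‖w‖ ≤ (K * ‖ContinuousLinearMap.id ℂ X - Pr‖ + ‖Pr‖ / ‖μ‖) *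
      ‖A w + μ • w‖ := by
  intro w
  set Q := ContinuousLinearMap.id ℂ X - Pr with hQ
  set y := A w + μ • w with hy
  have hPrPr : ∀ v : X, Pr (Pr v) = Pr v := fun v =>
    congrArg (fun T : X →L[ℂ] X => T v) hPr
  have hPrA' : ∀ v : X, Pr (A v) = 0 := fun v =>
    congrArg (fun T : X →L[ℂ] X => T v) hPrA
  have hAPr' : ∀ v : X, A (Pr v) = 0 := fun v =>
    congrArg (fun T : X →L[ℂ] X => T v) hAPr
  -- Pr y = μ • Pr w
  have hPry : Pr y = μ • Pr w := by
    simp [hy, hPrA' w]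
  have hPrw_bound : ‖Pr w‖ ≤ ‖Pr‖ / ‖μ‖ * ‖y‖ := by
    have : ‖μ‖ * ‖Pr w‖ = ‖Pr y‖ := by rw [hPry, norm_smul]
    have h1 : ‖Pr y‖ ≤ ‖Pr‖ * ‖y‖ := Pr.le_opNorm y
    have hμ' : 0 < ‖μ‖ := norm_pos_iff.mpr hμ
    rw [div_mul_eq_mul_div, le_div_iff₀ hμ']
    nlinarith [this]
  -- x := Q w is in ker Pr
  have hxker : Q w ∈ LinearMap.ker (Pr : X →ₗ[ℂ] X) := by
    simp [hQ, LinearMap.mem_ker, map_sub, hPrPr w]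
  have hAx : A (Q w) + μ • (Q w) = Q y := by
    simp [hQ, hy, map_sub, hAPr' w, hPrA' w, hPry, smul_sub]; abel
  have hQw : ‖Q w‖ ≤ K * ‖Q‖ * ‖y‖ := by
    have := hres (Q w) hxker
    rw [hAx] at this
    calc ‖Q w‖ ≤ K * ‖Q y‖ := this
      _ ≤ K * (‖Q‖ * ‖y‖) := by
          exact mul_le_mul_of_nonneg_left (Q.le_opNorm y) hK.le
      _ = K * ‖Q‖ * ‖y‖ := by ring
  have hsplit : w = Q w + Pr w := by simp [hQ]
  calc ‖w‖ = ‖Q w + Pr w‖ := by rw [← hsplit]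
    _ ≤ ‖Q w‖ + ‖Pr w‖ := norm_add_le _ _
    _ ≤ K * ‖Q‖ * ‖y‖ + ‖Pr‖ / ‖μ‖ * ‖y‖ := add_le_add hQw hPrw_bound
    _ = (K * ‖Q‖ + ‖Pr‖ / ‖μ‖) * ‖y‖ := by ring
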